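/- Let p, q be relatively prime natural numbers and J ∈ ℕ. Then the subgroup of ℝ generated by the numbers (p/q)^j for |j| ≤ J equals (1/(pq)^J)·ℤ. -/

import Mathlib

/-- for coprime `p, q` and `J ∈ ℕ`, the subgroup of `ℝ` generated by
the numbers `(p/q)^j`, `|j| ≤ J`, equals `(1/(pq)^J) ℤ`. -/
theorem stmt15 (p q : ℕ) (hp : 0 < p) (hq : 0 < q) (hpq : Nat.Coprime p q) (J : ℕ) :
    ((AddSubgroup.closure
        {x : ℝ | ∃ j : ℤ, |j| ≤ (J : ℤ) ∧ x = ((p : ℝ) / (q : ℝ)) ^ j} :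
      AddSubgroup ℝ) : Set ℝ) =
    {x : ℝ | ∃ m : ℤ, x = (m : ℝ) / ((p * q : ℕ) ^ J : ℝ)} := by
  have hp0 : (p:ℝ) ≠ 0 := Nat.cast_ne_zero.mpr hp.ne'
  have hq0 : (q:ℝ) ≠ 0 := Nat.cast_ne_zero.mpr hq.ne'
  set d : ℝ := ((p * q : ℕ) ^ J : ℝ) with hd
  have hdval : d = (p:ℝ)^J * (q:ℝ)^J := by rw [hd]; push_cast; ring
  have hd0 : d ≠ 0 := by rw [hdval]; positivity
  -- generators lie in (1/d)ℤ
  have key1 : ∀ j : ℤ, |j| ≤ (J:ℤ) →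
      ∃ m : ℤ, ((p : ℝ) / (q : ℝ)) ^ j = (m : ℝ) / d := by
    intro j hj
    rw [abs_le] at hj
    obtain ⟨h1, h2⟩ := hj
    refine ⟨(p:ℤ)^((J:ℤ)+j).toNat * (q:ℤ)^((J:ℤ)-j).toNat, ?_⟩
    have ha : ((((J:ℤ)+j).toNat : ℤ)) = (J:ℤ)+j := Int.toNat_of_nonneg (by linarith)
    have hb : ((((J:ℤ)-j).toNat : ℤ)) = (J:ℤ)-j := Int.toNat_of_nonneg (by linarith)
    have hpa : ((p:ℝ))^(((J:ℤ)+j).toNat) = (p:ℝ)^((J:ℤ)+j) := by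
      rw [← zpow_natCast, ha]
    have hqb : ((q:ℝ))^(((J:ℤ)-j).toNat) = (q:ℝ)^((J:ℤ)-j) := by
      rw [← zpow_natCast, hb]
    push_cast
    rw [hpa, hqb, hdval, div_zpow, zpow_add₀ hp0, zpow_sub₀ hq0,
      zpow_natCast, zpow_natCast]
    field_simp
  -- 1/d lies in the closure
  have hJmem : ((p:ℝ)/(q:ℝ)) ^ (J:ℤ) ∈ AddSubgroup.closure
      {x : ℝ | ∃ j : ℤ, |j| ≤ (J : ℤ) ∧ x = ((p : ℝ) / (q : ℝ)) ^ j} :=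
    AddSubgroup.subset_closure ⟨(J:ℤ), by simp, rfl⟩
  have hnegJmem : ((p:ℝ)/(q:ℝ)) ^ (-(J:ℤ)) ∈ AddSubgroup.closure
      {x : ℝ | ∃ j : ℤ, |j| ≤ (J : ℤ) ∧ x = ((p : ℝ) / (q : ℝ)) ^ j} :=
    AddSubgroup.subset_closure ⟨-(J:ℤ), by simp, rfl⟩
  have hcop : IsCoprime ((p:ℤ)^(2*J)) ((q:ℤ)^(2*J)) :=
    (Nat.isCoprime_iff_coprime.mpr hpq).pow
  obtain ⟨a, b, hab⟩ := hcop
  have habR : (a:ℝ) * (p:ℝ)^(2*J) + (b:ℝ) * (q:ℝ)^(2*J) = 1 := by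
    exact_mod_cast congrArg (Int.cast : ℤ → ℝ) hab
  have hcmem : (1:ℝ)/d ∈ AddSubgroup.closure
      {x : ℝ | ∃ j : ℤ, |j| ≤ (J : ℤ) ∧ x = ((p : ℝ) / (q : ℝ)) ^ j} := by
    have hmem := AddSubgroup.add_mem _ (AddSubgroup.zsmul_mem _ hJmem a)
      (AddSubgroup.zsmul_mem _ hnegJmem b)
    have heq : a • (((p:ℝ)/(q:ℝ)) ^ (J:ℤ)) + b • (((p:ℝ)/(q:ℝ)) ^ (-(J:ℤ)))
        = (1:ℝ)/d := by
      rw [zsmul_eq_mul, zsmul_eq_mul, zpow_neg, zpow_natCast, hdval]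
      rw [div_pow]
      field_simp
      linear_combination habR
    rwa [heq] at hmem
  ext x
  simp only [SetLike.mem_coe, Set.mem_setOf_eq]
  constructor
  · intro hx
    induction hx using AddSubgroup.closure_induction with
    | mem y hy =>
      obtain ⟨j, hj, rfl⟩ := hy
      exact key1 j hj
    | zero => exact ⟨0, by simp⟩
    | add y z _ _ hy hz =>
      obtain ⟨m, rfl⟩ := hy
      obtain ⟨n, rfl⟩ := hz
      exact ⟨m + n, by push_cast; ring⟩
    | neg y _ hy =>
      obtain ⟨m, rfl⟩ := hy
      exact ⟨-m, by push_cast; ring⟩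
  · rintro ⟨m, rfl⟩
    have := AddSubgroup.zsmul_mem _ hcmem m
    have heq : m • ((1:ℝ)/d) = (m:ℝ)/d := by
      rw [zsmul_eq_mul]; ring
    rwa [heq] at this
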